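/- For every fixed λ > 0: ∫ (λ/(s + λ))² dMP(γ)(s) → λ²/(1 + λ)² and ∫ s/(s + λ)² dMP(γ)(s) → 1/(1 + λ)² as γ → 0⁺. -/

import Mathlib

open MeasureTheory Filter


/-- The Marchenko–Pastur measure with aspect ratio `γ`: a point mass of weight
`max 0 (1 - 1/γ)` at `0` plus the absolutely continuous part with density
`s ↦ √((b - s)(s - a)) / (2πγs)` on `[a, b]`, where `a = (1 - √γ)²`, `b = (1 + √γ)²`. -/
noncomputable def MP (γ : ℝ) : Measure ℝ :=
  ENNReal.ofReal (max 0 (1 - 1 / γ)) • Measure.dirac 0 +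
    volume.withDensity
      (Set.indicator (Set.Icc ((1 - Real.sqrt γ) ^ 2) ((1 + Real.sqrt γ) ^ 2))
        (fun s => ENNReal.ofReal
          (Real.sqrt (((1 + Real.sqrt γ) ^ 2 - s) * (s - (1 - Real.sqrt γ) ^ 2)) /
            (2 * Real.pi * γ * s))))

open scoped ENNReal NNReal

section aux
open Real Set intervalIntegral

lemma semicircle_integral {a b : ℝ} (hab : a ≤ b) :
    ∫ s in a..b, Real.sqrt ((b - s) * (s - a)) = Real.pi * (b - a) ^ 2 / 8 := by
  rcases eq_or_lt_of_le hab with rfl | hab'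
  · simp
  set r := (b - a) / 2 with hr
  set c := (a + b) / 2 with hc
  have hr0 : 0 < r := by rw [hr]; linarith
  have key : (∫ x in (-1 : ℝ)..1, Real.sqrt ((b - (r * x + c)) * ((r * x + c) - a)))
      = r⁻¹ • ∫ s in (r * (-1) + c)..(r * 1 + c), Real.sqrt ((b - s) * (s - a)) :=
    integral_comp_mul_add (fun s => Real.sqrt ((b - s) * (s - a))) hr0.ne' c
  have hend1 : r * (-1) + c = a := by rw [hr, hc]; ring
  have hend2 : r * 1 + c = b := by rw [hr, hc]; ring
  rw [hend1, hend2] at key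
  have hpt : ∀ x : ℝ, Real.sqrt ((b - (r * x + c)) * ((r * x + c) - a))
      = r * Real.sqrt (1 - x ^ 2) := by
    intro x
    have h1 : (b - (r * x + c)) * ((r * x + c) - a) = r ^ 2 * (1 - x ^ 2) := by
      rw [hr, hc]; ring
    rw [h1, Real.sqrt_mul (by positivity), Real.sqrt_sq hr0.le]
  simp only [hpt] at key
  rw [intervalIntegral.integral_const_mul, integral_sqrt_one_sub_sq] at key
  have := key.symm
  rw [smul_eq_mul] at this
  field_simp at this
  rw [hr] at this
  nlinarith [this]

lemma sqrt_lt_one' {γ : ℝ} (hγ0 : 0 < γ) (hγ1 : γ < 1) : Real.sqrt γ < 1 := by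
  nlinarith [Real.sq_sqrt hγ0.le, Real.sqrt_nonneg γ]

lemma MP_integral_eq (γ : ℝ) (hγ0 : 0 < γ) (hγ1 : γ < 1) (f : ℝ → ℝ) :
    ∫ s, f s ∂(MP γ) =
      ∫ s in ((1 - Real.sqrt γ) ^ 2)..((1 + Real.sqrt γ) ^ 2),
        f s * (Real.sqrt (((1 + Real.sqrt γ) ^ 2 - s) * (s - (1 - Real.sqrt γ) ^ 2)) /
          (2 * Real.pi * γ * s)) := by
  set a := (1 - Real.sqrt γ) ^ 2 with ha
  set b := (1 + Real.sqrt γ) ^ 2 with hb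
  set g : ℝ → ℝ := fun s => Real.sqrt ((b - s) * (s - a)) / (2 * Real.pi * γ * s) with hg
  have hs1 : Real.sqrt γ < 1 := sqrt_lt_one' hγ0 hγ1
  have ha0 : 0 < a := by rw [ha]; nlinarith
  have hab : a ≤ b := by nlinarith [Real.sqrt_nonneg γ]
  have hcoef : ENNReal.ofReal (max 0 (1 - 1 / γ)) = 0 := by
    rw [ENNReal.ofReal_eq_zero]
    have h1 : 1 - 1 / γ ≤ 0 := by
      rw [sub_nonpos, le_div_iff₀ hγ0]; linarith
    simp [h1]
    nlinarith [mul_inv_cancel₀ hγ0.ne', inv_nonneg.2 hγ0.le]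
  have hMP : MP γ = (volume.restrict (Set.Icc a b)).withDensity
      (fun s => ((g s).toNNReal : ℝ≥0∞)) := by
    rw [MP, hcoef, zero_smul, zero_add, MeasureTheory.withDensity_indicator measurableSet_Icc]
    rfl
  have hgmeas : Measurable fun s => (g s).toNNReal := by
    apply Measurable.real_toNNReal
    rw [hg]
    fun_prop
  rw [hMP, integral_withDensity_eq_integral_smul hgmeas]
  have hcongr : ∀ s ∈ Set.Icc a b, (g s).toNNReal • f s = f s * g s := by
    intro s hs
    have hs0 : 0 < s := lt_of_lt_of_le ha0 hs.1
    have hg0 : 0 ≤ g s := by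
      rw [hg]
      positivity
    rw [NNReal.smul_def, smul_eq_mul, Real.coe_toNNReal _ hg0, mul_comm]
  rw [MeasureTheory.setIntegral_congr_fun measurableSet_Icc hcongr,
    MeasureTheory.integral_Icc_eq_integral_Ioc, ← intervalIntegral.integral_of_le hab]

lemma MP_integral_bounds (γ : ℝ) (hγ0 : 0 < γ) (hγ1 : γ < 1) (f : ℝ → ℝ) (m M : ℝ)
    (hm0 : 0 ≤ m)
    (hf : ContinuousOn f (Set.Icc ((1 - Real.sqrt γ) ^ 2) ((1 + Real.sqrt γ) ^ 2)))
    (hm : ∀ s ∈ Set.Icc ((1 - Real.sqrt γ) ^ 2) ((1 + Real.sqrt γ) ^ 2), m ≤ f s)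
    (hM : ∀ s ∈ Set.Icc ((1 - Real.sqrt γ) ^ 2) ((1 + Real.sqrt γ) ^ 2), f s ≤ M) :
    m / (1 + Real.sqrt γ) ^ 2 ≤ (∫ s, f s ∂(MP γ)) ∧
      (∫ s, f s ∂(MP γ)) ≤ M / (1 - Real.sqrt γ) ^ 2 := by
  set a := (1 - Real.sqrt γ) ^ 2 with ha
  set b := (1 + Real.sqrt γ) ^ 2 with hb
  set g : ℝ → ℝ := fun s => Real.sqrt ((b - s) * (s - a)) / (2 * Real.pi * γ * s) with hg
  have hs1 : Real.sqrt γ < 1 := sqrt_lt_one' hγ0 hγ1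
  have ha0 : 0 < a := by rw [ha]; nlinarith
  have hab : a ≤ b := by nlinarith [Real.sqrt_nonneg γ]
  have hb0 : 0 < b := lt_of_lt_of_le ha0 hab
  have hM0 : 0 ≤ M := le_trans hm0 (le_trans (hm a ⟨le_refl a, hab⟩) (hM a ⟨le_refl a, hab⟩))
  have hba : b - a = 4 * Real.sqrt γ := by rw [ha, hb]; ring
  have hba2 : (b - a) ^ 2 = 16 * γ := by
    rw [hba, mul_pow, Real.sq_sqrt hγ0.le]; ring
  have hIeq := MP_integral_eq γ hγ0 hγ1 f
  rw [hIeq]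
  have huIcc : Set.uIcc a b = Set.Icc a b := Set.uIcc_of_le hab
  -- continuity of g on Icc
  have hgcont : ContinuousOn g (Set.Icc a b) := by
    apply ContinuousOn.div
    · exact (Real.continuous_sqrt.comp ((continuous_const.sub continuous_id).mul
        (continuous_id.sub continuous_const))).continuousOn
    · exact (continuous_const.mul continuous_id).continuousOn
    · intro s hs
      have : 0 < s := lt_of_lt_of_le ha0 hs.1
      positivity
  have hfg_int : IntervalIntegrable (fun s => f s * g s) volume a b := by
    apply ContinuousOn.intervalIntegrable
    rw [huIcc]
    exact hf.mul hgcont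
  have hsqrt_cont : Continuous fun s : ℝ => Real.sqrt ((b - s) * (s - a)) :=
    Real.continuous_sqrt.comp ((continuous_const.sub continuous_id).mul
      (continuous_id.sub continuous_const))
  have hsc : ∫ s in a..b, Real.sqrt ((b - s) * (s - a)) = Real.pi * (b - a) ^ 2 / 8 :=
    semicircle_integral hab
  constructor
  · -- lower bound
    have hpt : ∀ s ∈ Set.uIcc a b,
        m * (Real.sqrt ((b - s) * (s - a)) / (2 * Real.pi * γ * b)) ≤ f s * g s := by
      intro s hs
      rw [huIcc] at hs
      have hs0 : 0 < s := lt_of_lt_of_le ha0 hs.1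
      have hsq : 0 ≤ Real.sqrt ((b - s) * (s - a)) := Real.sqrt_nonneg _
      have hg0 : 0 ≤ g s := by rw [hg]; positivity
      calc m * (Real.sqrt ((b - s) * (s - a)) / (2 * Real.pi * γ * b))
          ≤ m * g s := by
            apply mul_le_mul_of_nonneg_left _ hm0
            rw [hg]
            exact div_le_div_of_nonneg_left hsq (by positivity)
              (mul_le_mul_of_nonneg_left hs.2 (by positivity))
        _ ≤ f s * g s := mul_le_mul_of_nonneg_right (hm s hs) hg0
    have hint1 : IntervalIntegrable
        (fun s => m * (Real.sqrt ((b - s) * (s - a)) / (2 * Real.pi * γ * b))) volume a b := by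
      apply Continuous.intervalIntegrable
      exact continuous_const.mul ((Real.continuous_sqrt.comp ((continuous_const.sub continuous_id).mul (continuous_id.sub continuous_const))).div_const _)
    have := intervalIntegral.integral_mono_on hab hint1 hfg_int
      (fun s hs => hpt s (by rw [huIcc]; exact hs))
    have hval : Real.pi * (b - a) ^ 2 / 8 / (2 * Real.pi * γ * b) = 1 / b := by
      rw [hba2]
      field_simp [Real.pi_ne_zero, hγ0.ne', hb0.ne']
      ring
    calc m / b = m * (Real.pi * (b - a) ^ 2 / 8 / (2 * Real.pi * γ * b)) := by
          rw [hval]; ring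
      _ = ∫ s in a..b, m * (Real.sqrt ((b - s) * (s - a)) / (2 * Real.pi * γ * b)) := by
          rw [intervalIntegral.integral_const_mul, intervalIntegral.integral_div, hsc]
      _ ≤ _ := this
  · -- upper bound
    have hpt : ∀ s ∈ Set.uIcc a b,
        f s * g s ≤ M * (Real.sqrt ((b - s) * (s - a)) / (2 * Real.pi * γ * a)) := by
      intro s hs
      rw [huIcc] at hs
      have hs0 : 0 < s := lt_of_lt_of_le ha0 hs.1
      have hsq : 0 ≤ Real.sqrt ((b - s) * (s - a)) := Real.sqrt_nonneg _
      have hg0 : 0 ≤ g s := by rw [hg]; positivity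
      calc f s * g s ≤ M * g s := mul_le_mul_of_nonneg_right (hM s hs) hg0
        _ ≤ M * (Real.sqrt ((b - s) * (s - a)) / (2 * Real.pi * γ * a)) := by
            apply mul_le_mul_of_nonneg_left _ hM0
            rw [hg]
            exact div_le_div_of_nonneg_left hsq (by positivity)
              (mul_le_mul_of_nonneg_left hs.1 (by positivity))
    have hint2 : IntervalIntegrable
        (fun s => M * (Real.sqrt ((b - s) * (s - a)) / (2 * Real.pi * γ * a))) volume a b := by
      apply Continuous.intervalIntegrable
      exact continuous_const.mul ((Real.continuous_sqrt.comp ((continuous_const.sub continuous_id).mul (continuous_id.sub continuous_const))).div_const _)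
    have := intervalIntegral.integral_mono_on hab hfg_int hint2
      (fun s hs => hpt s (by rw [huIcc]; exact hs))
    calc (∫ s in a..b, f s * g s)
        ≤ ∫ s in a..b, M * (Real.sqrt ((b - s) * (s - a)) / (2 * Real.pi * γ * a)) := this
      _ = M * (Real.pi * (b - a) ^ 2 / 8 / (2 * Real.pi * γ * a)) := by
          rw [intervalIntegral.integral_const_mul, intervalIntegral.integral_div, hsc]
      _ = M / a := by
          have hval : Real.pi * (b - a) ^ 2 / 8 / (2 * Real.pi * γ * a) = 1 / a := by
            rw [hba2]
            field_simp [Real.pi_ne_zero, hγ0.ne', ha0.ne']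
            ring
          rw [hval]; ring

lemma tendsto_a : Tendsto (fun γ : ℝ => (1 - Real.sqrt γ) ^ 2)
    (nhdsWithin 0 (Set.Ioi 0)) (nhds 1) := by
  have h : Continuous fun γ : ℝ => (1 - Real.sqrt γ) ^ 2 := by continuity
  have h2 : Tendsto (fun γ : ℝ => (1 - Real.sqrt γ) ^ 2) (nhds 0) (nhds 1) := by
    simpa using h.tendsto 0
  exact h2.mono_left nhdsWithin_le_nhds

lemma tendsto_b : Tendsto (fun γ : ℝ => (1 + Real.sqrt γ) ^ 2)
    (nhdsWithin 0 (Set.Ioi 0)) (nhds 1) := by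
  have h : Continuous fun γ : ℝ => (1 + Real.sqrt γ) ^ 2 := by continuity
  have h2 : Tendsto (fun γ : ℝ => (1 + Real.sqrt γ) ^ 2) (nhds 0) (nhds 1) := by
    simpa using h.tendsto 0
  exact h2.mono_left nhdsWithin_le_nhds

end aux

theorem stmt15 (lam : ℝ) (hlam : 0 < lam) :
    Tendsto (fun γ => ∫ s, (lam / (s + lam)) ^ 2 ∂(MP γ))
      (nhdsWithin 0 (Set.Ioi 0)) (nhds (lam ^ 2 / (1 + lam) ^ 2)) ∧
    Tendsto (fun γ => ∫ s, s / (s + lam) ^ 2 ∂(MP γ))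
      (nhdsWithin 0 (Set.Ioi 0)) (nhds (1 / (1 + lam) ^ 2)) := by
  have hIoo : Set.Ioo (0:ℝ) 1 ∈ nhdsWithin (0:ℝ) (Set.Ioi 0) :=
    Ioo_mem_nhdsGT_of_mem ⟨le_refl 0, one_pos⟩
  have h1lam : (0:ℝ) < 1 + lam := by linarith
  constructor
  · -- first integral
    have hL : Tendsto (fun γ : ℝ => (lam / ((1 + Real.sqrt γ) ^ 2 + lam)) ^ 2
        / (1 + Real.sqrt γ) ^ 2) (nhdsWithin 0 (Set.Ioi 0)) (nhds (lam ^ 2 / (1 + lam) ^ 2)) := by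
      have hden : Tendsto (fun γ : ℝ => (1 + Real.sqrt γ) ^ 2 + lam)
          (nhdsWithin 0 (Set.Ioi 0)) (nhds (1 + lam)) := by
        simpa using tendsto_b.add (tendsto_const_nhds : Tendsto (fun _ : ℝ => lam) _ (nhds lam))
      have hnum : Tendsto (fun γ : ℝ => lam / ((1 + Real.sqrt γ) ^ 2 + lam))
          (nhdsWithin 0 (Set.Ioi 0)) (nhds (lam / (1 + lam))) :=
        tendsto_const_nhds.div hden h1lam.ne'
      have h3 := (hnum.pow 2).div tendsto_b one_ne_zero
      have heq : (lam / (1 + lam)) ^ 2 / 1 = lam ^ 2 / (1 + lam) ^ 2 := by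
        rw [div_pow, div_one]
      rw [heq] at h3
      exact h3
    have hU : Tendsto (fun γ : ℝ => (lam / ((1 - Real.sqrt γ) ^ 2 + lam)) ^ 2
        / (1 - Real.sqrt γ) ^ 2) (nhdsWithin 0 (Set.Ioi 0)) (nhds (lam ^ 2 / (1 + lam) ^ 2)) := by
      have hden : Tendsto (fun γ : ℝ => (1 - Real.sqrt γ) ^ 2 + lam)
          (nhdsWithin 0 (Set.Ioi 0)) (nhds (1 + lam)) := by
        simpa using tendsto_a.add (tendsto_const_nhds : Tendsto (fun _ : ℝ => lam) _ (nhds lam))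
      have hnum : Tendsto (fun γ : ℝ => lam / ((1 - Real.sqrt γ) ^ 2 + lam))
          (nhdsWithin 0 (Set.Ioi 0)) (nhds (lam / (1 + lam))) :=
        tendsto_const_nhds.div hden h1lam.ne'
      have h3 := (hnum.pow 2).div tendsto_a one_ne_zero
      have heq : (lam / (1 + lam)) ^ 2 / 1 = lam ^ 2 / (1 + lam) ^ 2 := by
        rw [div_pow, div_one]
      rw [heq] at h3
      exact h3
    have hbound : ∀ γ ∈ Set.Ioo (0:ℝ) 1,
        (lam / ((1 + Real.sqrt γ) ^ 2 + lam)) ^ 2 / (1 + Real.sqrt γ) ^ 2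
          ≤ (∫ s, (lam / (s + lam)) ^ 2 ∂(MP γ)) ∧
        (∫ s, (lam / (s + lam)) ^ 2 ∂(MP γ))
          ≤ (lam / ((1 - Real.sqrt γ) ^ 2 + lam)) ^ 2 / (1 - Real.sqrt γ) ^ 2 := by
      intro γ hγ
      have hs1 : Real.sqrt γ < 1 := sqrt_lt_one' hγ.1 hγ.2
      have ha0 : (0:ℝ) < (1 - Real.sqrt γ) ^ 2 := by nlinarith
      have hcont : ContinuousOn (fun s : ℝ => (lam / (s + lam)) ^ 2)
          (Set.Icc ((1 - Real.sqrt γ) ^ 2) ((1 + Real.sqrt γ) ^ 2)) := by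
        apply ContinuousOn.pow
        apply ContinuousOn.div continuousOn_const (Continuous.continuousOn (continuous_id.add continuous_const))
        intro s hs
        have : 0 < s := lt_of_lt_of_le ha0 hs.1
        show s + lam ≠ 0
        exact ne_of_gt (by linarith)
      have hlow : ∀ s ∈ Set.Icc ((1 - Real.sqrt γ) ^ 2) ((1 + Real.sqrt γ) ^ 2),
          (lam / ((1 + Real.sqrt γ) ^ 2 + lam)) ^ 2 ≤ (lam / (s + lam)) ^ 2 := by
        intro s hs
        have hs0 : 0 < s := lt_of_lt_of_le ha0 hs.1
        apply pow_le_pow_left₀ (by positivity)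
        exact div_le_div_of_nonneg_left hlam.le (by linarith) (by linarith [hs.2])
      have hup : ∀ s ∈ Set.Icc ((1 - Real.sqrt γ) ^ 2) ((1 + Real.sqrt γ) ^ 2),
          (lam / (s + lam)) ^ 2 ≤ (lam / ((1 - Real.sqrt γ) ^ 2 + lam)) ^ 2 := by
        intro s hs
        have hs0 : 0 < s := lt_of_lt_of_le ha0 hs.1
        apply pow_le_pow_left₀ (by positivity)
        exact div_le_div_of_nonneg_left hlam.le (by linarith) (by linarith [hs.1])
      exact MP_integral_bounds γ hγ.1 hγ.2 _ _ _ (by positivity) hcont hlow hup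
    apply tendsto_of_tendsto_of_tendsto_of_le_of_le' hL hU
    · filter_upwards [hIoo] with γ hγ
      exact (hbound γ hγ).1
    · filter_upwards [hIoo] with γ hγ
      exact (hbound γ hγ).2
  · -- second integral
    have hL : Tendsto (fun γ : ℝ => (1 - Real.sqrt γ) ^ 2 / ((1 + Real.sqrt γ) ^ 2 + lam) ^ 2
        / (1 + Real.sqrt γ) ^ 2) (nhdsWithin 0 (Set.Ioi 0)) (nhds (1 / (1 + lam) ^ 2)) := by
      have hden : Tendsto (fun γ : ℝ => (1 + Real.sqrt γ) ^ 2 + lam)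
          (nhdsWithin 0 (Set.Ioi 0)) (nhds (1 + lam)) := by
        simpa using tendsto_b.add (tendsto_const_nhds : Tendsto (fun _ : ℝ => lam) _ (nhds lam))
      have h3 := (tendsto_a.div (hden.pow 2) (by positivity)).div tendsto_b one_ne_zero
      have heq : (1 : ℝ) / (1 + lam) ^ 2 / 1 = 1 / (1 + lam) ^ 2 := by rw [div_one]
      rw [heq] at h3
      exact h3
    have hU : Tendsto (fun γ : ℝ => (1 + Real.sqrt γ) ^ 2 / ((1 - Real.sqrt γ) ^ 2 + lam) ^ 2
        / (1 - Real.sqrt γ) ^ 2) (nhdsWithin 0 (Set.Ioi 0)) (nhds (1 / (1 + lam) ^ 2)) := by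
      have hden : Tendsto (fun γ : ℝ => (1 - Real.sqrt γ) ^ 2 + lam)
          (nhdsWithin 0 (Set.Ioi 0)) (nhds (1 + lam)) := by
        simpa using tendsto_a.add (tendsto_const_nhds : Tendsto (fun _ : ℝ => lam) _ (nhds lam))
      have h3 := (tendsto_b.div (hden.pow 2) (by positivity)).div tendsto_a one_ne_zero
      have heq : (1 : ℝ) / (1 + lam) ^ 2 / 1 = 1 / (1 + lam) ^ 2 := by rw [div_one]
      rw [heq] at h3
      exact h3
    have hbound : ∀ γ ∈ Set.Ioo (0:ℝ) 1,
        (1 - Real.sqrt γ) ^ 2 / ((1 + Real.sqrt γ) ^ 2 + lam) ^ 2 / (1 + Real.sqrt γ) ^ 2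
          ≤ (∫ s, s / (s + lam) ^ 2 ∂(MP γ)) ∧
        (∫ s, s / (s + lam) ^ 2 ∂(MP γ))
          ≤ (1 + Real.sqrt γ) ^ 2 / ((1 - Real.sqrt γ) ^ 2 + lam) ^ 2 / (1 - Real.sqrt γ) ^ 2 := by
      intro γ hγ
      have hs1 : Real.sqrt γ < 1 := sqrt_lt_one' hγ.1 hγ.2
      have ha0 : (0:ℝ) < (1 - Real.sqrt γ) ^ 2 := by nlinarith
      have hcont : ContinuousOn (fun s : ℝ => s / (s + lam) ^ 2)
          (Set.Icc ((1 - Real.sqrt γ) ^ 2) ((1 + Real.sqrt γ) ^ 2)) := by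
        apply ContinuousOn.div continuousOn_id (Continuous.continuousOn ((continuous_id.add continuous_const).pow 2))
        intro s hs
        have : 0 < s := lt_of_lt_of_le ha0 hs.1
        show (s + lam) ^ 2 ≠ 0
        exact pow_ne_zero _ (ne_of_gt (by linarith))
      have hlow : ∀ s ∈ Set.Icc ((1 - Real.sqrt γ) ^ 2) ((1 + Real.sqrt γ) ^ 2),
          (1 - Real.sqrt γ) ^ 2 / ((1 + Real.sqrt γ) ^ 2 + lam) ^ 2 ≤ s / (s + lam) ^ 2 := by
        intro s hs
        have hs0 : 0 < s := lt_of_lt_of_le ha0 hs.1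
        apply div_le_div₀ hs0.le hs.1 (by positivity)
        apply pow_le_pow_left₀ (by linarith)
        linarith [hs.2]
      have hup : ∀ s ∈ Set.Icc ((1 - Real.sqrt γ) ^ 2) ((1 + Real.sqrt γ) ^ 2),
          s / (s + lam) ^ 2 ≤ (1 + Real.sqrt γ) ^ 2 / ((1 - Real.sqrt γ) ^ 2 + lam) ^ 2 := by
        intro s hs
        have hs0 : 0 < s := lt_of_lt_of_le ha0 hs.1
        apply div_le_div₀ (by positivity) hs.2 (by positivity)
        apply pow_le_pow_left₀ (by positivity)
        linarith [hs.1]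
      exact MP_integral_bounds γ hγ.1 hγ.2 _ _ _ (by positivity) hcont hlow hup
    apply tendsto_of_tendsto_of_tendsto_of_le_of_le' hL hU
    · filter_upwards [hIoo] with γ hγ
      exact (hbound γ hγ).1
    · filter_upwards [hIoo] with γ hγ
      exact (hbound γ hγ).2
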